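/- arXiv:2301.11866 — 2 statements merged into one kernel-verified Lean document; each statement's English description precedes it below -/
import Mathlib

section
/- Let X be a nonempty Stone space. If the Riesz space LocallyConstant(X,ℝ) is Dedekind complete (every nonempty subset that is bounded above has a supremum), then the Boolean algebra Clopens(X) of clopen subsets of X is complete (every subset of Clopens(X) has a supremum in Clopens(X)). -/
open TopologicalSpace

noncomputable instance {X : Type*} [TopologicalSpace X] : Max (LocallyConstant X ℝ) :=
  ⟨fun f g => ⟨fun x => max (f x) (g x), f.isLocallyConstant.comp₂ g.isLocallyConstant max⟩⟩

noncomputable instance {X : Type*} [TopologicalSpace X] : Min (LocallyConstant X ℝ) :=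
  ⟨fun f g => ⟨fun x => min (f x) (g x), f.isLocallyConstant.comp₂ g.isLocallyConstant min⟩⟩

/-- The pointwise lattice structure on locally constant real functions. -/
noncomputable instance {X : Type*} [TopologicalSpace X] : Lattice (LocallyConstant X ℝ) :=
  letI : LE (LocallyConstant X ℝ) := ⟨fun f g => ⇑f ≤ ⇑g⟩
  letI : LT (LocallyConstant X ℝ) := ⟨fun f g => ⇑f < ⇑g⟩
  Function.Injective.lattice _ DFunLike.coe_injective Iff.rfl Iff.rfl (fun _ _ => rfl) (fun _ _ => rfl)

lemma le_iff_pointwise {X : Type*} [TopologicalSpace X] (f g : LocallyConstant X ℝ) :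
    f ≤ g ↔ ∀ x, f x ≤ g x := Iff.rfl

theorem stmt4 {X : Type*}
    [TopologicalSpace X] [CompactSpace X] [T2Space X] [TotallyDisconnectedSpace X] [Nonempty X]
    (hDC : ∀ D : Set (LocallyConstant X ℝ), D.Nonempty → BddAbove D →
      ∃ s : LocallyConstant X ℝ, IsLUB D s) :
    ∀ S : Set (Clopens X), ∃ s : Clopens X, IsLUB S s := by
  intro S
  classical
  rcases S.eq_empty_or_nonempty with h | ⟨U0, hU0⟩
  · exact ⟨⊥, by simp [h]⟩
  set D : Set (LocallyConstant X ℝ) :=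
    (fun U : Clopens X => LocallyConstant.charFn ℝ U.isClopen) '' S with hD
  have hindle : ∀ (U : Clopens X) (x : X), (LocallyConstant.charFn ℝ U.isClopen) x ≤ 1 := by
    intro U x
    simp only [LocallyConstant.coe_charFn]
    by_cases hx : x ∈ (U : Set X) <;> simp [Set.indicator_apply, hx]
  have hDne : D.Nonempty := ⟨_, ⟨U0, hU0, rfl⟩⟩
  have hbdd : BddAbove D := by
    refine ⟨LocallyConstant.const X 1, ?_⟩
    rintro f ⟨U, hU, rfl⟩
    intro x
    exact hindle U x
  obtain ⟨f, hf⟩ := hDC D hDne hbdd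
  have hopen : IsOpen {x | 1 ≤ f x} := by
    have := f.isLocallyConstant (Set.Ici (1:ℝ))
    simpa [Set.preimage, Set.Ici] using this
  have hclosed : IsClosed {x | 1 ≤ f x} := by
    have := f.isLocallyConstant (Set.Iio (1:ℝ))
    rw [← isOpen_compl_iff]
    have : {x | 1 ≤ f x}ᶜ = f ⁻¹' Set.Iio 1 := by
      ext x; simp [not_le]
    rw [this]
    exact f.isLocallyConstant _
  refine ⟨⟨{x | 1 ≤ f x}, hclosed, hopen⟩, ?_, ?_⟩
  · rintro U hU x hx
    have hle : LocallyConstant.charFn ℝ U.isClopen ≤ f := hf.1 ⟨U, hU, rfl⟩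
    have h1 : (LocallyConstant.charFn ℝ U.isClopen) x = 1 := by
      simp [LocallyConstant.coe_charFn, Set.indicator_apply, hx]
    show (1:ℝ) ≤ f x
    exact h1 ▸ hle x
  · rintro W hW x hx
    have hub : LocallyConstant.charFn ℝ W.isClopen ∈ upperBounds D := by
      rintro g ⟨U, hU, rfl⟩ y
      simp only [LocallyConstant.coe_charFn, Set.indicator_apply]
      by_cases hy : y ∈ (U : Set X)
      · have : y ∈ (W : Set X) := hW hU hy
        simp [hy, this]
      · simp only [hy, if_false]
        split <;> norm_num
    have hle : f ≤ LocallyConstant.charFn ℝ W.isClopen := hf.2 hub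
    have := le_trans hx (hle x)
    by_contra hxW
    simp [LocallyConstant.coe_charFn, Set.indicator_apply, hxW] at this
    linarith
end

section
/- Let X be a nonempty Stone space. The components of the constant function 1 in the Riesz space LocallyConstant(X,ℝ) are exactly the indicator functions of clopen subsets of X, the map sending a clopen set U to its indicator function 1_U is a Boolean isomorphism from Clopens(X) onto the Boolean algebra of components of 1, and LocallyConstant(X,ℝ) equals the linear span of these indicator functions. -/
open TopologicalSpace

/-- The indicator (characteristic) function of a clopen set, as a locally constant
real-valued function. -/
noncomputable def indLC {X : Type*} [TopologicalSpace X] (U : Clopens X) :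
    LocallyConstant X ℝ :=
  LocallyConstant.charFn ℝ U.isClopen

open Classical in
lemma indLC_apply {X : Type*} [TopologicalSpace X] (U : Clopens X) (x : X) :
    indLC U x = if x ∈ U then 1 else 0 := by
  show Set.indicator (U : Set X) 1 x = _
  rw [Set.indicator_apply]
  simp [SetLike.mem_coe]

lemma inf_apply' {X : Type*} [TopologicalSpace X] (u v : LocallyConstant X ℝ) (x : X) :
    (u ⊓ v) x = min (u x) (v x) := rfl

lemma sup_apply' {X : Type*} [TopologicalSpace X] (u v : LocallyConstant X ℝ) (x : X) :
    (u ⊔ v) x = max (u x) (v x) := rfl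

lemma le_iff' {X : Type*} [TopologicalSpace X] (u v : LocallyConstant X ℝ) :
    u ≤ v ↔ ∀ x, u x ≤ v x := Iff.rfl

lemma sub_apply'' {X : Type*} [TopologicalSpace X] (u v : LocallyConstant X ℝ) (x : X) :
    (u - v) x = u x - v x := rfl

lemma one_apply'' {X : Type*} [TopologicalSpace X] (x : X) :
    (1 : LocallyConstant X ℝ) x = 1 := rfl

lemma comp_iff {X : Type*} [TopologicalSpace X] (u : LocallyConstant X ℝ) :
    (0 ≤ u ∧ u ⊓ (1 - u) = 0) ↔ ∃ U : Clopens X, u = indLC U := by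
  constructor
  · rintro ⟨h0, h1⟩
    have hval : ∀ x, u x = 0 ∨ u x = 1 := by
      intro x
      have hx0 : (0 : ℝ) ≤ u x := (le_iff' _ _).mp h0 x
      have hx1 : min (u x) (1 - u x) = 0 := by
        have := congrArg (fun f : LocallyConstant X ℝ => f x) h1
        simpa [inf_apply', sub_apply'', one_apply''] using this
      rcases min_eq_iff.mp hx1 with ⟨h, _⟩ | ⟨h, _⟩
      · exact Or.inl h
      · right; linarith
    have hclopen : IsClopen {x | u x = 1} := u.isLocallyConstant.isClopen_fiber 1
    refine ⟨⟨{x | u x = 1}, hclopen⟩, ?_⟩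
    ext x
    rw [indLC_apply]
    have hmem : x ∈ (⟨{x | u x = 1}, hclopen⟩ : Clopens X) ↔ u x = 1 := Iff.rfl
    rcases hval x with h | h <;> simp [hmem, h]
  · rintro ⟨U, rfl⟩
    constructor
    · rw [le_iff']
      intro x
      by_cases h : x ∈ U <;> simp [indLC_apply, h, sub_apply'', one_apply'']
    · ext x
      rw [inf_apply']
      by_cases h : x ∈ U <;> simp [indLC_apply, h, sub_apply'', one_apply'']

lemma indLC_inj {X : Type*} [TopologicalSpace X] :
    Function.Injective (indLC (X := X)) := by
  intro U V h
  exact SetLike.coe_injective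
    (LocallyConstant.charFn_inj ℝ U.isClopen V.isClopen h)

theorem stmt11 {X : Type*}
    [TopologicalSpace X] [CompactSpace X] [T2Space X] [TotallyDisconnectedSpace X] [Nonempty X] :
    -- the components of the constant function 1 are exactly the indicator
    -- functions of clopen subsets of X
    (∀ u : LocallyConstant X ℝ,
      (0 ≤ u ∧ u ⊓ (1 - u) = 0) ↔ ∃ U : Clopens X, u = indLC U) ∧
    -- U ↦ 1_U is a Boolean isomorphism onto the components of 1:
    -- it is injective, ...
    Function.Injective (indLC (X := X)) ∧
    -- ... its range is exactly the set of components of 1, ...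
    Set.range (indLC (X := X)) = {u : LocallyConstant X ℝ | 0 ≤ u ∧ u ⊓ (1 - u) = 0} ∧
    -- ... it preserves meets, the symmetric difference, and the top element, ...
    (∀ U V : Clopens X, indLC (U ⊓ V) = indLC U ⊓ indLC V) ∧
    (∀ U V : Clopens X, indLC (symmDiff U V) =
      (indLC U ⊓ (1 - indLC V)) ⊔ ((1 - indLC U) ⊓ indLC V)) ∧
    indLC (⊤ : Clopens X) = 1 ∧
    -- ... and LocallyConstant X ℝ is the linear span of the indicator functions
    Submodule.span ℝ (Set.range (indLC (X := X))) = ⊤ := by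
  refine ⟨comp_iff, indLC_inj, ?_, ?_, ?_, ?_, ?_⟩
  · ext u
    simp only [Set.mem_range, Set.mem_setOf_eq, comp_iff]
    exact ⟨fun ⟨U, h⟩ => ⟨U, h.symm⟩, fun ⟨U, h⟩ => ⟨U, h.symm⟩⟩
  · intro U V
    ext x
    have hm : x ∈ U ⊓ V ↔ x ∈ U ∧ x ∈ V := by
      rw [← SetLike.mem_coe, Clopens.coe_inf]; simp [SetLike.mem_coe]
    by_cases hU : x ∈ U <;> by_cases hV : x ∈ V <;>
      simp [inf_apply', indLC_apply, hm, hU, hV]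
  · intro U V
    ext x
    have hm : x ∈ symmDiff U V ↔ (x ∈ U ∧ x ∉ V) ∨ (x ∈ V ∧ x ∉ U) := by
      rw [symmDiff_def, ← SetLike.mem_coe]
      simp only [Clopens.coe_sup, Clopens.coe_sdiff, Set.mem_union, Set.mem_diff,
        SetLike.mem_coe]
    by_cases hU : x ∈ U <;> by_cases hV : x ∈ V <;>
      simp [sup_apply', inf_apply', indLC_apply, hm, hU, hV, sub_apply'', one_apply'']
  · ext x
    have hm : x ∈ (⊤ : Clopens X) := trivial
    simp [indLC_apply, hm]
  · rw [Submodule.eq_top_iff']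
    intro f
    have hfin : (Set.range f).Finite := f.range_finite
    have key : f = ∑ y ∈ hfin.toFinset, y •
        indLC ⟨f ⁻¹' {y}, f.isLocallyConstant.isClopen_fiber y⟩ := by
      ext x
      have := congrFun (map_sum (LocallyConstant.coeFnAddMonoidHom (X := X) (Y := ℝ))
        (fun y => y • indLC ⟨f ⁻¹' {y}, f.isLocallyConstant.isClopen_fiber y⟩)
        hfin.toFinset) x
      rw [show ((∑ y ∈ hfin.toFinset, y •
          indLC ⟨f ⁻¹' {y}, f.isLocallyConstant.isClopen_fiber y⟩) x) =
        ∑ y ∈ hfin.toFinset,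
          (y • indLC ⟨f ⁻¹' {y}, f.isLocallyConstant.isClopen_fiber y⟩) x from by
        simpa using this]
      rw [Finset.sum_eq_single (f x)]
      · have hmem : x ∈ (⟨f ⁻¹' {f x}, f.isLocallyConstant.isClopen_fiber (f x)⟩ :
            Clopens X) := rfl
        simp [indLC_apply, hmem]
      · intro y _ hy
        have hmem : x ∉ (⟨f ⁻¹' {y}, f.isLocallyConstant.isClopen_fiber y⟩ :
            Clopens X) := fun h => hy ((Set.mem_preimage.mp h).symm ▸ rfl)
        simp [indLC_apply, hmem]
      · intro h
        exact absurd (hfin.mem_toFinset.mpr (Set.mem_range_self x)) h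
    rw [key]
    exact Submodule.sum_mem _ fun y _ =>
      Submodule.smul_mem _ _ (Submodule.subset_span (Set.mem_range_self _))
end
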